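/- Let r > 0, let μ be a finite Borel measure on ℝ with μ(ℝ \ [−r, 0]) = 0, let p ≥ 1 be a real number, let φ : ℝ → ℝ be measurable, and let α > 0. Then ∫₀^{α} ( ∫_{θ ∈ [−r,0]} |φ(t + θ)| · 1_{t + θ ≤ 0} dμ(θ) )^p dt ≤ μ([−r, 0])^p · ∫_{[−r,0]} |φ(s)|^p ds, where all integrals are Lebesgue integrals of nonnegative measurable functions with values in [0, ∞]. -/

import Mathlib

open MeasureTheory

open ENNReal in
lemma holder_aux {ν : Measure ℝ} [IsFiniteMeasure ν] {f : ℝ → ℝ≥0∞}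
    (hf : AEMeasurable f ν) {p : ℝ} (hp : 1 ≤ p) :
    (∫⁻ x, f x ∂ν) ^ p ≤ (ν Set.univ) ^ (p - 1) * ∫⁻ x, f x ^ p ∂ν := by
  rcases eq_or_lt_of_le hp with h1 | h1
  · subst h1
    simp
  · have hp0 : (0:ℝ) < p := lt_trans one_pos h1
    set q : ℝ := p / (p - 1) with hq
    have hpq : p.HolderConjugate q := Real.HolderConjugate.conjExponent h1
    have key := ENNReal.lintegral_mul_le_Lp_mul_Lq ν hpq hf aemeasurable_const (g := fun _ => 1)
    simp only [Pi.mul_apply, mul_one, one_rpow, lintegral_const, one_mul] at key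
    have key2 := ENNReal.rpow_le_rpow key hp0.le
    calc (∫⁻ x, f x ∂ν) ^ p
        ≤ ((∫⁻ x, f x ^ p ∂ν) ^ (1 / p) * (ν Set.univ) ^ (1 / q)) ^ p := key2
      _ = (∫⁻ x, f x ^ p ∂ν) * (ν Set.univ) ^ (p - 1) := by
          rw [ENNReal.mul_rpow_of_nonneg _ _ hp0.le, ← ENNReal.rpow_mul,
            ← ENNReal.rpow_mul, one_div_mul_cancel hp0.ne', ENNReal.rpow_one]
          congr 1
          rw [hq]
          field_simp
      _ = (ν Set.univ) ^ (p - 1) * ∫⁻ x, f x ^ p ∂ν := mul_comm _ _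

theorem stmt_15 (r : ℝ) (hr : 0 < r) (μ : Measure ℝ) [IsFiniteMeasure μ]
    (hμ : μ (Set.Icc (-r) 0)ᶜ = 0)
    (p : ℝ) (hp : 1 ≤ p) (φ : ℝ → ℝ) (hφ : Measurable φ) (α : ℝ) (hα : 0 < α) :
    ∫⁻ t in Set.Icc (0 : ℝ) α,
        (∫⁻ θ in Set.Icc (-r) 0,
          ENNReal.ofReal (|φ (t + θ)|) * (if t + θ ≤ 0 then 1 else 0) ∂μ) ^ p
      ≤ (μ (Set.Icc (-r) 0)) ^ p *
        ∫⁻ s in Set.Icc (-r) (0 : ℝ), ENNReal.ofReal (|φ s| ^ p) := by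
  have hp0 : (0:ℝ) < p := lt_of_lt_of_le one_pos hp
  set S : Set ℝ := Set.Icc (-r) 0 with hSdef
  have hSm : MeasurableSet S := measurableSet_Icc
  set F : ℝ → ENNReal := fun s => ENNReal.ofReal (|φ s| ^ p) with hF
  have hphirp : Measurable fun s => |φ s| ^ p := by fun_prop
  have hFmeas : Measurable F := ENNReal.measurable_ofReal.comp hphirp
  -- pointwise power identity
  have hpow : ∀ t θ : ℝ,
      (ENNReal.ofReal (|φ (t + θ)|) * (if t + θ ≤ 0 then 1 else 0)) ^ p
        = F (t + θ) * (if t + θ ≤ 0 then 1 else 0) := by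
    intro t θ
    split_ifs with h
    · rw [mul_one, mul_one]
      exact ENNReal.ofReal_rpow_of_nonneg (abs_nonneg _) hp0.le
    · rw [mul_zero, mul_zero]
      exact ENNReal.zero_rpow_of_pos hp0
  -- Step 1: Hölder in θ, for each t
  have step1 : ∀ t : ℝ,
      (∫⁻ θ in S, ENNReal.ofReal (|φ (t + θ)|) * (if t + θ ≤ 0 then 1 else 0) ∂μ) ^ p
        ≤ (μ S) ^ (p - 1) * ∫⁻ θ in S, F (t + θ) * (if t + θ ≤ 0 then 1 else 0) ∂μ := by
    intro t
    have hfm : Measurable fun θ => ENNReal.ofReal (|φ (t + θ)|) *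
        (if t + θ ≤ 0 then (1:ENNReal) else 0) := by
      apply Measurable.mul
      · exact ENNReal.measurable_ofReal.comp ((hφ.comp (measurable_const.add measurable_id)).abs)
      · exact Measurable.ite (measurableSet_le (measurable_const.add measurable_id)
          measurable_const) measurable_const measurable_const
    have := holder_aux (ν := μ.restrict S) hfm.aemeasurable hp
    rw [Measure.restrict_apply_univ] at this
    refine this.trans_eq ?_
    congr 1
    exact lintegral_congr fun θ => hpow t θ
  -- Step 2: integrate over t and swap
  have hGm : Measurable (Function.uncurry fun t θ =>
      F (t + θ) * (if t + θ ≤ 0 then (1:ENNReal) else 0)) := by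
    apply Measurable.mul
    · exact hFmeas.comp (measurable_fst.add measurable_snd)
    · exact Measurable.ite (measurableSet_le (measurable_fst.add measurable_snd)
        measurable_const) measurable_const measurable_const
  have swap :
      ∫⁻ t in Set.Icc (0:ℝ) α, ∫⁻ θ in S, F (t + θ) * (if t + θ ≤ 0 then 1 else 0) ∂μ
        = ∫⁻ θ in S, ∫⁻ t in Set.Icc (0:ℝ) α, F (t + θ) * (if t + θ ≤ 0 then 1 else 0) ∂(volume) ∂μ :=
    lintegral_lintegral_swap hGm.aemeasurable
  -- Step 3: inner estimate via translation invariance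
  have step3 : ∀ θ ∈ S,
      (∫⁻ t in Set.Icc (0:ℝ) α, F (t + θ) * (if t + θ ≤ 0 then 1 else 0))
        ≤ ∫⁻ s in S, F s := by
    intro θ hθ
    have hmono : ∀ t : ℝ, (Set.Icc (0:ℝ) α).indicator
        (fun t => F (t + θ) * (if t + θ ≤ 0 then 1 else 0)) t
          ≤ (fun t => S.indicator F (t + θ)) t := by
      intro t
      by_cases ht : t ∈ Set.Icc (0:ℝ) α
      · rw [Set.indicator_of_mem ht]
        by_cases h0 : t + θ ≤ 0
        · have hmem : t + θ ∈ S := ⟨le_trans hθ.1 (by linarith [ht.1]), h0⟩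
          rw [if_pos h0, mul_one]
          exact (Set.indicator_of_mem hmem F).symm.le
        · rw [if_neg h0, mul_zero]
          exact zero_le
      · rw [Set.indicator_of_notMem ht]
        exact zero_le
    calc ∫⁻ t in Set.Icc (0:ℝ) α, F (t + θ) * (if t + θ ≤ 0 then 1 else 0)
        = ∫⁻ t, (Set.Icc (0:ℝ) α).indicator
            (fun t => F (t + θ) * (if t + θ ≤ 0 then 1 else 0)) t := by
          rw [lintegral_indicator measurableSet_Icc]
      _ ≤ ∫⁻ t, S.indicator F (t + θ) := lintegral_mono hmono
      _ = ∫⁻ s, S.indicator F s := lintegral_add_right_eq_self (S.indicator F) θ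
      _ = ∫⁻ s in S, F s := lintegral_indicator hSm F
  -- put everything together
  calc ∫⁻ t in Set.Icc (0:ℝ) α,
        (∫⁻ θ in S, ENNReal.ofReal (|φ (t + θ)|) * (if t + θ ≤ 0 then 1 else 0) ∂μ) ^ p
      ≤ ∫⁻ t in Set.Icc (0:ℝ) α,
          (μ S) ^ (p - 1) * ∫⁻ θ in S, F (t + θ) * (if t + θ ≤ 0 then 1 else 0) ∂μ :=
        lintegral_mono fun t => step1 t
    _ = (μ S) ^ (p - 1) * ∫⁻ t in Set.Icc (0:ℝ) α,
          ∫⁻ θ in S, F (t + θ) * (if t + θ ≤ 0 then 1 else 0) ∂μ := by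
        rw [lintegral_const_mul _ (Measurable.lintegral_prod_right hGm)]
    _ = (μ S) ^ (p - 1) * ∫⁻ θ in S,
          (∫⁻ t in Set.Icc (0:ℝ) α, F (t + θ) * (if t + θ ≤ 0 then 1 else 0)) ∂μ := by
        rw [swap]
    _ ≤ (μ S) ^ (p - 1) * ∫⁻ θ in S, (∫⁻ s in S, F s) ∂μ := by
        refine mul_le_mul_right ?_ _
        exact lintegral_mono_ae (μ := μ.restrict S)
          ((ae_restrict_mem hSm).mono fun θ hθ => step3 θ hθ)
    _ = (μ S) ^ (p - 1) * (μ S * ∫⁻ s in S, F s) := by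
        rw [setLIntegral_const]; ring
    _ ≤ (μ S) ^ p * ∫⁻ s in S, F s := by
        rcases eq_or_ne (μ S) 0 with h0 | h0
        · simp [h0]
        · have htop : μ S ≠ ⊤ := measure_ne_top μ S
          have hrp : (μ S) ^ (p - 1) * μ S = (μ S) ^ p := by
            calc (μ S) ^ (p - 1) * μ S = (μ S) ^ (p - 1) * (μ S) ^ (1:ℝ) := by
                  rw [ENNReal.rpow_one]
              _ = (μ S) ^ (p - 1 + 1) := (ENNReal.rpow_add _ _ h0 htop).symm
              _ = (μ S) ^ p := by rw [sub_add_cancel]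
          rw [← mul_assoc, hrp]
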